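/- Let n, n', t be positive integers with n' = t·n and ⌊α·n'⌉ = t·⌊α·n⌉, and let ε > 0 satisfy ε < 1/(2t), ε + t·‖α·n‖ < 1/2, and t·ε + ‖α·n‖ < 1/2. Then for every positive integer m with ‖α·m‖ < ε, setting m' := t·m, one has |Δ∘g(n, m') − Δ∘g(n', m)| ≤ 2. -/
import Mathlib


/-!
STATEMENT 10: converse estimate: if n' = t·n with ⌊α·n'⌉ = t·⌊α·n⌉ and ε is small
enough, then |Δ∘g(n, t·m) − Δ∘g(n', m)| ≤ 2 whenever ‖α·m‖ < ε.
-/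

namespace Stmt10

/-- The symmetric discrete derivative `Δ∘g(n, m) = g(n+m) − g(n) − g(m) + g(0)`. -/
def Δo (g : ℤ → ℤ) (n m : ℤ) : ℤ := g (n + m) - g n - g m + g 0

lemma round_eq_of_abs {k : ℤ} {x : ℝ} (h : |x - k| < 1/2) : round x = k := by
  have h' := abs_lt.mp h
  rw [round_eq, Int.floor_eq_iff]
  refine ⟨by linarith [h'.1], by push_cast; linarith [h'.2]⟩

lemma r_lb (x : ℝ) : x - 1/2 < round x := by
  rw [round_eq]
  have := Int.sub_one_lt_floor (x + 1/2)
  push_cast at this ⊢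
  linarith

lemma r_ub (x : ℝ) : (round x : ℝ) ≤ x + 1/2 := by
  rw [round_eq]
  exact_mod_cast Int.floor_le (x + 1/2)

theorem estimate (α β : ℝ) (hα : 0 < α) (hβ : 0 < β)
    (hind : LinearIndependent ℚ ![(1 : ℝ), α, α ^ 2])
    (hβ' : (∃ b : ℤ, β = (b : ℝ)) ∨ Irrational β)
    (g : ℤ → ℤ) (hg : ∀ n : ℤ, g n = round (β * n * round (α * n)))
    (n n' t : ℤ) (hn : 0 < n) (hn' : 0 < n') (ht : 0 < t)
    (hmul : n' = t * n) (hround : round (α * n') = t * round (α * n))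
    (ε : ℝ) (hε : 0 < ε) (hε1 : ε < 1 / (2 * t))
    (hε2 : ε + t * |α * n - round (α * n)| < 1 / 2)
    (hε3 : t * ε + |α * n - round (α * n)| < 1 / 2) :
    ∀ m : ℤ, 0 < m → |α * m - round (α * m)| < ε →
      |Δo g n (t * m) - Δo g n' m| ≤ 2 := by
  intro m hm hεm
  set A : ℤ := round (α * n) with hA
  set B : ℤ := round (α * m) with hB
  have ht' : (0:ℝ) < (t:ℝ) := by exact_mod_cast ht
  have habsn : (0:ℝ) ≤ |α * n - A| := abs_nonneg _
  -- round splittings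
  have h1 : round (α * ((t * m : ℤ) : ℝ)) = t * B := by
    apply round_eq_of_abs
    have he : α * ((t * m : ℤ) : ℝ) - ((t * B : ℤ) : ℝ) = (t:ℝ) * (α * m - B) := by
      push_cast; ring
    rw [he, abs_mul, abs_of_pos ht']
    nlinarith
  have h2 : round (α * ((n + t * m : ℤ) : ℝ)) = A + t * B := by
    apply round_eq_of_abs
    have he : α * ((n + t * m : ℤ) : ℝ) - ((A + t * B : ℤ) : ℝ)
        = (α * n - A) + (t:ℝ) * (α * m - B) := by push_cast; ring
    rw [he]
    have := abs_add_le (α * n - (A:ℝ)) ((t:ℝ) * (α * m - B))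
    rw [abs_mul, abs_of_pos ht'] at this
    nlinarith
  have h3 : round (α * ((t * n + m : ℤ) : ℝ)) = t * A + B := by
    apply round_eq_of_abs
    have he : α * ((t * n + m : ℤ) : ℝ) - ((t * A + B : ℤ) : ℝ)
        = (t:ℝ) * (α * n - A) + (α * m - B) := by push_cast; ring
    rw [he]
    have := abs_add_le ((t:ℝ) * (α * n - (A:ℝ))) (α * m - (B:ℝ))
    rw [abs_mul, abs_of_pos ht'] at this
    nlinarith
  have h4 : round (α * ((t * n : ℤ) : ℝ)) = t * A := by
    rw [← hmul]; exact hround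
  -- the six real values
  set x1 : ℝ := β * ((n + t * m : ℤ) : ℝ) * ((A + t * B : ℤ) : ℝ) with hx1
  set x2 : ℝ := β * ((t * n + m : ℤ) : ℝ) * ((t * A + B : ℤ) : ℝ) with hx2
  set x3 : ℝ := β * (n : ℝ) * (A : ℝ) with hx3
  set x4 : ℝ := β * ((t * n : ℤ) : ℝ) * ((t * A : ℤ) : ℝ) with hx4
  set x5 : ℝ := β * ((t * m : ℤ) : ℝ) * ((t * B : ℤ) : ℝ) with hx5
  set x6 : ℝ := β * (m : ℝ) * (B : ℝ) with hx6
  have hg0 : g 0 = 0 := by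
    rw [hg]; push_cast; simp
  have e1 : g (n + t * m) = round x1 := by rw [hg, h2]
  have e2 : g (t * n + m) = round x2 := by rw [hg, h3]
  have e3 : g n = round x3 := by rw [hg, ← hA]
  have e4 : g (t * n) = round x4 := by rw [hg, h4]
  have e5 : g (t * m) = round x5 := by rw [hg, h1]
  have e6 : g m = round x6 := by rw [hg, ← hB]
  have key : Δo g n (t * m) - Δo g n' m
      = round x1 - round x2 - round x3 + round x4 - round x5 + round x6 := by
    simp only [Δo, hmul]
    rw [e1, e2, e3, e4, e5, e6, hg0]
    ring
  have hzero : x1 - x2 - x3 + x4 - x5 + x6 = 0 := by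
    simp only [hx1, hx2, hx3, hx4, hx5, hx6]
    push_cast
    ring
  have lb1 := r_lb x1; have ub1 := r_ub x1
  have lb2 := r_lb x2; have ub2 := r_ub x2
  have lb3 := r_lb x3; have ub3 := r_ub x3
  have lb4 := r_lb x4; have ub4 := r_ub x4
  have lb5 := r_lb x5; have ub5 := r_ub x5
  have lb6 := r_lb x6; have ub6 := r_ub x6
  rw [key]
  have hreal : |((round x1 - round x2 - round x3 + round x4 - round x5 + round x6 : ℤ) : ℝ)| < 3 := by
    push_cast
    rw [abs_lt]
    constructor <;> linarith
  have : |round x1 - round x2 - round x3 + round x4 - round x5 + round x6| < 3 := by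
    exact_mod_cast hreal
  omega
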